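/- Let n ≥ 2, let ζ_1, …, ζ_{n-1} ∈ ℍ, and let P(x) = ∏_{j=1}^{n-1} (x - ζ_j)(x - conj(ζ_j)). Suppose t_1 < t_2 < … < t_{n-1} satisfy the equilibrium equations (17) and x_1 < x_2 < … < x_n satisfy the equilibrium equations (10); set Q(x) = ∏_{k=1}^n (x - x_k) and S(x) = ∏_{k=1}^{n-1} (x - t_k). If R and R̃ are real polynomials such that P·Q'' - P'·Q' + R·Q = 0 and P·S'' - P'·S' + R̃·S = 0, then R = R̃. -/

import Mathlib

open Polynomial Finset Complex ComplexConjugate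

/-- Double root criterion. -/
lemma vv_sq_dvd_of_root {G : Polynomial ℝ} {a : ℝ}
    (h0 : G.eval a = 0) (h1 : (derivative G).eval a = 0) : (X - C a) ^ 2 ∣ G := by
  obtain ⟨G1, hG⟩ := (dvd_iff_isRoot (p := G) (a := a)).mpr h0
  subst hG
  have hd : (derivative ((X - C a) * G1)).eval a = G1.eval a := by
    simp [derivative_mul]
  rw [hd] at h1
  obtain ⟨G2, hG2⟩ := (dvd_iff_isRoot (p := G1) (a := a)).mpr h1
  exact ⟨G2, by rw [hG2]; ring⟩

/-- Product of squares of distinct linear factors divides. -/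
lemma vv_prod_sq_dvd {ι : Type*} [Fintype ι] [DecidableEq ι] {r : ι → ℝ}
    (hr : Function.Injective r) {G : Polynomial ℝ}
    (h : ∀ i, (X - C (r i)) ^ 2 ∣ G) : (∏ i, (X - C (r i)) ^ 2) ∣ G := by
  refine Finset.prod_dvd_of_coprime ?_ (fun i _ => h i)
  intro i _ j _ hij
  exact ((pairwise_coprime_X_sub_C hr) hij).pow

/-- Product of distinct linear factors divides. -/
lemma vv_prod_dvd {ι : Type*} [Fintype ι] [DecidableEq ι] {r : ι → ℝ}
    (hr : Function.Injective r) {G : Polynomial ℝ}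
    (h : ∀ i, G.eval (r i) = 0) : (∏ i, (X - C (r i))) ∣ G := by
  refine Finset.prod_dvd_of_coprime ?_ (fun i _ => dvd_iff_isRoot.mpr (h i))
  intro i _ j _ hij
  exact (pairwise_coprime_X_sub_C hr) hij

/-- A polynomial of degree < card vanishing at all points is zero. -/
lemma vv_eq_zero_of_roots {ι : Type*} [Fintype ι] [DecidableEq ι] {r : ι → ℝ}
    (hr : Function.Injective r) {G : Polynomial ℝ}
    (hdeg : G.degree < (Fintype.card ι : ℕ)) (h : ∀ i, G.eval (r i) = 0) : G = 0 := by
  refine eq_zero_of_dvd_of_degree_lt (vv_prod_dvd hr h) ?_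
  have hm : (∏ i : ι, (X - C (r i))).Monic :=
    monic_prod_of_monic _ _ (fun i _ => monic_X_sub_C (r i))
  have hnd : (∏ i : ι, (X - C (r i))).natDegree = Fintype.card ι := by
    rw [natDegree_prod_of_monic _ _ (fun i _ => monic_X_sub_C (r i))]
    simp
  rw [degree_eq_natDegree hm.ne_zero, hnd]
  exact hdeg

/-- **Lemma 9.** Let `t 1 < … < t (n-1)` satisfy the equilibrium equations (17) and let
`x 1 < … < x n` satisfy the equilibrium equations (10). Then the Van Vleck polynomials
`R` and `R̃` corresponding to the Stieltjes polynomials `Q(x) = ∏ (x - x k)` and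
`S(x) = ∏ (x - t k)` of the equations `P·Q'' - P'·Q' + R·Q = 0` and
`P·S'' - P'·S' + R̃·S = 0` coincide. -/
theorem van_vleck_polynomials_coincide
    (n : ℕ) (hn : 2 ≤ n) (ζ : Fin (n - 1) → ℂ) (hζ : ∀ j, 0 < (ζ j).im)
    (P : Polynomial ℝ)
    (hP : P.map (algebraMap ℝ ℂ) = ∏ j, (X - C (ζ j)) * (X - C (conj (ζ j))))
    (t : Fin (n - 1) → ℝ) (ht : StrictMono t)
    (ht17 : ∀ k : Fin (n - 1),
      (∑ j ∈ Finset.univ.erase k, 2 / ((t k : ℂ) - (t j : ℂ)))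
        - ∑ j, (1 / ((t k : ℂ) - ζ j) + 1 / ((t k : ℂ) - conj (ζ j))) = 0)
    (x : Fin n → ℝ) (hx : StrictMono x)
    (hx10 : ∀ k : Fin n,
      (∑ j ∈ Finset.univ.erase k, 2 / ((x k : ℂ) - (x j : ℂ)))
        - ∑ j, (1 / ((x k : ℂ) - ζ j) + 1 / ((x k : ℂ) - conj (ζ j))) = 0)
    (Q : Polynomial ℝ) (hQ : Q = ∏ k, (X - C (x k)))
    (S : Polynomial ℝ) (hS : S = ∏ k, (X - C (t k)))
    (R R' : Polynomial ℝ)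
    (hR : P * derivative (derivative Q) - derivative P * derivative Q + R * Q = 0)
    (hR' : P * derivative (derivative S) - derivative P * derivative S + R' * S = 0) :
    R = R' := by
  classical
  -- basic positivity of P on ℝ
  have halg : ∀ y : ℝ, (algebraMap ℝ ℂ) y = (y : ℂ) := fun y => rfl
  have hinj : Function.Injective (algebraMap ℝ ℂ) := (algebraMap ℝ ℂ).injective
  have hPpos : ∀ y : ℝ, 0 < P.eval y := by
    intro y
    have h1 : (algebraMap ℝ ℂ) (P.eval y)
        = (P.map (algebraMap ℝ ℂ)).eval ((algebraMap ℝ ℂ) y) := by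
      rw [eval_map, eval₂_at_apply]
    rw [hP] at h1
    have h2 : (∏ j, ((X : Polynomial ℂ) - C (ζ j)) * (X - C (conj (ζ j)))).eval
        ((algebraMap ℝ ℂ) y) = ∏ j, (((y : ℂ) - ζ j) * ((y : ℂ) - conj (ζ j))) := by
      rw [eval_prod]
      refine Finset.prod_congr rfl (fun j _ => ?_)
      simp [halg]
    have h3 : ∀ j : Fin (n - 1), ((y : ℂ) - ζ j) * ((y : ℂ) - conj (ζ j))
        = ((Complex.normSq ((y : ℂ) - ζ j) : ℝ) : ℂ) := by
      intro j
      have : conj ((y : ℂ) - ζ j) = (y : ℂ) - conj (ζ j) := by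
        simp [map_sub, Complex.conj_ofReal]
      rw [← this, Complex.mul_conj]
    have h4 : ((P.eval y : ℝ) : ℂ) = ((∏ j, Complex.normSq ((y : ℂ) - ζ j) : ℝ) : ℂ) := by
      rw [← halg, h1, h2]
      rw [Finset.prod_congr rfl (fun j _ => h3 j)]
      push_cast
      ring
    have h5 : P.eval y = ∏ j, Complex.normSq ((y : ℂ) - ζ j) := by
      exact_mod_cast h4
    rw [h5]
    refine Finset.prod_pos (fun j _ => ?_)
    refine Complex.normSq_pos.mpr ?_
    intro hzero
    have him : ((y : ℂ) - ζ j).im = 0 := by rw [hzero]; simp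
    simp only [Complex.sub_im, Complex.ofReal_im, zero_sub, neg_eq_zero] at him
    exact absurd him (ne_of_gt (hζ j))
  -- P is monic of degree 2*(n-1)
  have hRHSmonic : (∏ j, ((X : Polynomial ℂ) - C (ζ j)) * (X - C (conj (ζ j)))).Monic :=
    monic_prod_of_monic _ _ (fun j _ => (monic_X_sub_C _).mul (monic_X_sub_C _))
  have hPmonic : P.Monic := by
    have h1 : (algebraMap ℝ ℂ) P.leadingCoeff = (P.map (algebraMap ℝ ℂ)).leadingCoeff :=
      (leadingCoeff_map_of_injective hinj P).symm
    rw [hP, hRHSmonic.leadingCoeff] at h1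
    have : (algebraMap ℝ ℂ) P.leadingCoeff = (algebraMap ℝ ℂ) 1 := by
      rw [h1]; simp
    exact hinj this
  have hPdeg : P.natDegree = 2 * (n - 1) := by
    have h1 : (P.map (algebraMap ℝ ℂ)).natDegree = P.natDegree :=
      natDegree_map_eq_of_injective hinj P
    rw [hP] at h1
    rw [← h1]
    rw [natDegree_prod_of_monic _ _ (fun j _ => (monic_X_sub_C _).mul (monic_X_sub_C _))]
    have : ∀ j : Fin (n - 1), (((X : Polynomial ℂ) - C (ζ j)) * (X - C (conj (ζ j)))).natDegree = 2 := by
      intro j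
      rw [(monic_X_sub_C _).natDegree_mul (monic_X_sub_C _)]
      simp
    rw [Finset.sum_congr rfl (fun j _ => this j)]
    simp [mul_comm]
  -- the reduced products
  set Qk : Fin n → Polynomial ℝ := fun k => ∏ l ∈ univ.erase k, (X - C (x l)) with hQk
  set Sj : Fin (n - 1) → Polynomial ℝ := fun j => ∏ i ∈ univ.erase j, (X - C (t i)) with hSj
  have hQsplit : ∀ k, Q = (X - C (x k)) * Qk k := by
    intro k; rw [hQ, hQk]; exact (Finset.mul_prod_erase univ _ (mem_univ k)).symm
  have hSsplit : ∀ j, S = (X - C (t j)) * Sj j := by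
    intro j; rw [hS, hSj]; exact (Finset.mul_prod_erase univ _ (mem_univ j)).symm
  have hQkmonic : ∀ k, (Qk k).Monic :=
    fun k => monic_prod_of_monic _ _ (fun i _ => monic_X_sub_C _)
  have hSjmonic : ∀ j, (Sj j).Monic :=
    fun j => monic_prod_of_monic _ _ (fun i _ => monic_X_sub_C _)
  have hQkdeg : ∀ k, (Qk k).natDegree = n - 1 := by
    intro k
    rw [natDegree_prod_of_monic _ _ (fun i _ => monic_X_sub_C _)]
    simp [Finset.card_erase_of_mem]
  have hSjdeg : ∀ j, (Sj j).natDegree = n - 1 - 1 := by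
    intro j
    rw [natDegree_prod_of_monic _ _ (fun i _ => monic_X_sub_C _)]
    simp [Finset.card_erase_of_mem]
  -- cross vanishing
  have hcrossQ : ∀ k l : Fin n, k ≠ l → (Qk k).eval (x l) = 0 := by
    intro k l hkl
    rw [hQk]
    simp only [eval_prod]
    refine Finset.prod_eq_zero (Finset.mem_erase.mpr ⟨Ne.symm hkl, mem_univ l⟩) ?_
    simp
  have hcrossS : ∀ j i : Fin (n - 1), j ≠ i → (Sj j).eval (t i) = 0 := by
    intro j i hji
    rw [hSj]
    simp only [eval_prod]
    refine Finset.prod_eq_zero (Finset.mem_erase.mpr ⟨Ne.symm hji, mem_univ i⟩) ?_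
    simp
  -- key scalars
  set q : Fin n → ℝ := fun k => (Qk k).eval (x k) with hq
  set s' : Fin (n - 1) → ℝ := fun j => (Sj j).eval (t j) with hs'
  have hqne : ∀ k, q k ≠ 0 := by
    intro k
    rw [hq]
    simp only [hQk, eval_prod]
    refine Finset.prod_ne_zero_iff.mpr ?_
    intro l hl
    have : l ≠ k := (Finset.mem_erase.mp hl).1
    simp only [eval_sub, eval_X, eval_C]
    exact sub_ne_zero.mpr (fun hxy => this (hx.injective hxy.symm))
  have hs'ne : ∀ j, s' j ≠ 0 := by
    intro j
    rw [hs']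
    simp only [hSj, eval_prod]
    refine Finset.prod_ne_zero_iff.mpr ?_
    intro i hi
    have : i ≠ j := (Finset.mem_erase.mp hi).1
    simp only [eval_sub, eval_X, eval_C]
    exact sub_ne_zero.mpr (fun hxy => this (ht.injective hxy.symm))
  obtain ⟨b, hbeq⟩ : ∃ b : Fin n → ℝ, ∀ k, b k = P.eval (x k) / (q k) ^ 2 :=
    ⟨_, fun _ => rfl⟩
  obtain ⟨c, hceq⟩ : ∃ c : Fin (n - 1) → ℝ, ∀ j, c j = P.eval (t j) / (s' j) ^ 2 :=
    ⟨_, fun _ => rfl⟩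
  have hbpos : ∀ k, 0 < b k := by
    intro k; rw [hbeq k]
    exact div_pos (hPpos _) (pow_two_pos_of_ne_zero (hqne k))
  have hcpos : ∀ j, 0 < c j := by
    intro j; rw [hceq j]
    exact div_pos (hPpos _) (pow_two_pos_of_ne_zero (hs'ne j))
  -- Identity (I)
  have hqe : ∀ k, (Qk k).eval (x k) ≠ 0 := fun k => hqne k
  have hbdef : ∀ k, b k * ((Qk k).eval (x k)) ^ 2 = P.eval (x k) := by
    intro k
    rw [hbeq k]
    exact div_mul_cancel₀ _ (pow_ne_zero 2 (hqe k))
  have hQzero : ∀ k, Q.eval (x k) = 0 := by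
    intro k; rw [hQsplit k]; simp
  have hQder : ∀ k, (derivative Q).eval (x k) = (Qk k).eval (x k) := by
    intro k
    rw [hQsplit k, derivative_mul]
    simp
  have hQdsplit : ∀ k, derivative Q = Qk k + (X - C (x k)) * derivative (Qk k) := by
    intro k
    conv_lhs => rw [hQsplit k]
    rw [derivative_mul]
    simp
  have hQdder : ∀ k, (derivative (derivative Q)).eval (x k)
      = 2 * (derivative (Qk k)).eval (x k) := by
    intro k
    rw [hQdsplit k, derivative_add, derivative_mul]
    simp
    ring
  have hODE : ∀ k, P.eval (x k) * (derivative (derivative Q)).eval (x k)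
      = (derivative P).eval (x k) * (Qk k).eval (x k) := by
    intro k
    have h0 := congrArg (eval (x k)) hR
    simp only [eval_add, eval_sub, eval_mul, eval_zero] at h0
    rw [hQzero k, mul_zero, add_zero, sub_eq_zero] at h0
    rw [h0, hQder k]
  have hPder : ∀ k, (derivative P).eval (x k)
      = 2 * b k * ((Qk k).eval (x k)) * ((derivative (Qk k)).eval (x k)) := by
    intro k
    have h3 := hODE k
    rw [hQdder k, ← hbdef k] at h3
    refine mul_right_cancel₀ (hqe k) ?_
    linear_combination -h3
  have hI : P = ∑ k, C (b k) * (Qk k) ^ 2 := by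
    have hGeval : ∀ k, (P - ∑ l, C (b l) * (Qk l) ^ 2).eval (x k) = 0 := by
      intro k
      simp only [eval_sub, eval_finset_sum, eval_mul, eval_C, eval_pow]
      rw [Finset.sum_eq_single k]
      · rw [hbdef k]; ring
      · intro l _ hlk
        rw [hcrossQ l k hlk]; ring
      · intro hk; exact absurd (mem_univ k) hk
    have hterm : ∀ l, derivative (C (b l) * (Qk l) ^ 2)
        = C (b l) * (derivative (Qk l) * Qk l + Qk l * derivative (Qk l)) := by
      intro l
      rw [pow_two, derivative_mul, derivative_C, zero_mul, zero_add, derivative_mul]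
    have hGder : ∀ k, (derivative (P - ∑ l, C (b l) * (Qk l) ^ 2)).eval (x k) = 0 := by
      intro k
      rw [derivative_sub, derivative_sum]
      rw [Finset.sum_congr rfl (fun l _ => hterm l)]
      simp only [eval_sub, eval_finset_sum, eval_mul, eval_C, eval_add]
      rw [Finset.sum_eq_single k]
      · rw [hPder k]; ring
      · intro l _ hlk
        rw [hcrossQ l k hlk]; ring
      · intro hk; exact absurd (mem_univ k) hk
    have hdvd : (∏ k, (X - C (x k)) ^ 2) ∣ (P - ∑ l, C (b l) * (Qk l) ^ 2) :=
      vv_prod_sq_dvd hx.injective (fun k => vv_sq_dvd_of_root (hGeval k) (hGder k))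
    have hprodmonic : (∏ k : Fin n, (X - C (x k)) ^ 2).Monic :=
      monic_prod_of_monic _ _ (fun k _ => (monic_X_sub_C _).pow _)
    have hproddeg : (∏ k : Fin n, (X - C (x k)) ^ 2).degree = ((2 * n : ℕ) : WithBot ℕ) := by
      rw [degree_eq_natDegree hprodmonic.ne_zero,
        natDegree_prod_of_monic _ _ (fun k _ => (monic_X_sub_C _).pow _)]
      have : ∀ k : Fin n, ((X - C (x k)) ^ 2).natDegree = 2 := by
        intro k
        rw [natDegree_pow, natDegree_X_sub_C]
      rw [Finset.sum_congr rfl (fun k _ => this k)]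
      simp [mul_comm]
    have hdegsum : (∑ l, C (b l) * (Qk l) ^ 2).degree ≤ ((2 * (n - 1) : ℕ) : WithBot ℕ) := by
      refine le_trans (degree_sum_le _ _) ?_
      refine Finset.sup_le (fun l _ => ?_)
      refine le_trans (degree_mul_le _ _) ?_
      have h1 : (C (b l)).degree ≤ 0 := degree_C_le
      have h2 : ((Qk l) ^ 2).degree = ((2 * (n - 1) : ℕ) : WithBot ℕ) := by
        rw [degree_eq_natDegree (((hQkmonic l).pow _).ne_zero), natDegree_pow, hQkdeg l]
      calc (C (b l)).degree + ((Qk l) ^ 2).degree ≤ 0 + ((2 * (n - 1) : ℕ) : WithBot ℕ) := by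
            exact add_le_add h1 (le_of_eq h2)
        _ = ((2 * (n - 1) : ℕ) : WithBot ℕ) := by rw [zero_add]
    have hdegG : (P - ∑ l, C (b l) * (Qk l) ^ 2).degree < (∏ k : Fin n, (X - C (x k)) ^ 2).degree := by
      rw [hproddeg]
      refine lt_of_le_of_lt (degree_sub_le _ _) ?_
      rw [sup_lt_iff]
      constructor
      · rw [degree_eq_natDegree hPmonic.ne_zero, hPdeg]
        exact_mod_cast (by omega : 2 * (n - 1) < 2 * n)
      · refine lt_of_le_of_lt hdegsum ?_
        exact_mod_cast (by omega : 2 * (n - 1) < 2 * n)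
    have hG0 : P - ∑ l, C (b l) * (Qk l) ^ 2 = 0 :=
      eq_zero_of_dvd_of_degree_lt hdvd hdegG
    exact (sub_eq_zero.mp hG0)
  -- Identity (II)
  have hSmonic : S.Monic := by
    rw [hS]; exact monic_prod_of_monic _ _ (fun i _ => monic_X_sub_C _)
  have hSdeg : S.natDegree = n - 1 := by
    rw [hS, natDegree_prod_of_monic _ _ (fun i _ => monic_X_sub_C _)]
    simp
  have hse : ∀ j, (Sj j).eval (t j) ≠ 0 := fun j => hs'ne j
  have hcdef : ∀ j, c j * ((Sj j).eval (t j)) ^ 2 = P.eval (t j) := by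
    intro j
    rw [hceq j]
    exact div_mul_cancel₀ _ (pow_ne_zero 2 (hse j))
  have hSzero : ∀ j, S.eval (t j) = 0 := by
    intro j; rw [hSsplit j]; simp
  have hSderv : ∀ j, (derivative S).eval (t j) = (Sj j).eval (t j) := by
    intro j
    rw [hSsplit j, derivative_mul]
    simp
  have hSdsplit : ∀ j, derivative S = Sj j + (X - C (t j)) * derivative (Sj j) := by
    intro j
    conv_lhs => rw [hSsplit j]
    rw [derivative_mul]
    simp
  have hSdder : ∀ j, (derivative (derivative S)).eval (t j)
      = 2 * (derivative (Sj j)).eval (t j) := by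
    intro j
    rw [hSdsplit j, derivative_add, derivative_mul]
    simp
    ring
  have hODES : ∀ j, P.eval (t j) * (derivative (derivative S)).eval (t j)
      = (derivative P).eval (t j) * (Sj j).eval (t j) := by
    intro j
    have h0 := congrArg (eval (t j)) hR'
    simp only [eval_add, eval_sub, eval_mul, eval_zero] at h0
    rw [hSzero j, mul_zero, add_zero, sub_eq_zero] at h0
    rw [h0, hSderv j]
  have hPderS : ∀ j, (derivative P).eval (t j)
      = 2 * c j * ((Sj j).eval (t j)) * ((derivative (Sj j)).eval (t j)) := by
    intro j
    have h3 := hODES j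
    rw [hSdder j, ← hcdef j] at h3
    refine mul_right_cancel₀ (hse j) ?_
    linear_combination -h3
  have hII : P = S ^ 2 + ∑ j, C (c j) * (Sj j) ^ 2 := by
    have hHeval : ∀ j, (P - S ^ 2 - ∑ i, C (c i) * (Sj i) ^ 2).eval (t j) = 0 := by
      intro j
      simp only [eval_sub, eval_finset_sum, eval_mul, eval_C, eval_pow]
      rw [hSzero j, Finset.sum_eq_single j]
      · rw [hcdef j]; ring
      · intro i _ hij
        rw [hcrossS i j hij]; ring
      · intro hj; exact absurd (mem_univ j) hj
    have htermS : ∀ i, derivative (C (c i) * (Sj i) ^ 2)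
        = C (c i) * (derivative (Sj i) * Sj i + Sj i * derivative (Sj i)) := by
      intro i
      rw [pow_two, derivative_mul, derivative_C, zero_mul, zero_add, derivative_mul]
    have hHder : ∀ j, (derivative (P - S ^ 2 - ∑ i, C (c i) * (Sj i) ^ 2)).eval (t j) = 0 := by
      intro j
      rw [derivative_sub, derivative_sub, derivative_sum]
      rw [Finset.sum_congr rfl (fun i _ => htermS i), pow_two, derivative_mul]
      simp only [eval_sub, eval_finset_sum, eval_mul, eval_C, eval_add]
      rw [hSzero j, Finset.sum_eq_single j]
      · rw [hPderS j]; ring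
      · intro i _ hij
        rw [hcrossS i j hij]; ring
      · intro hj; exact absurd (mem_univ j) hj
    have hdvd : (∏ j, (X - C (t j)) ^ 2) ∣ (P - S ^ 2 - ∑ i, C (c i) * (Sj i) ^ 2) :=
      vv_prod_sq_dvd ht.injective (fun j => vv_sq_dvd_of_root (hHeval j) (hHder j))
    have hSsq : S ^ 2 = ∏ j, (X - C (t j)) ^ 2 := by
      rw [hS, ← Finset.prod_pow]
    have hdegS2 : (S ^ 2).degree = ((2 * (n - 1) : ℕ) : WithBot ℕ) := by
      rw [degree_eq_natDegree ((hSmonic.pow _).ne_zero), natDegree_pow, hSdeg]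
    have hdegPS : (P - S ^ 2).degree < ((2 * (n - 1) : ℕ) : WithBot ℕ) := by
      have h1 : P.degree = (S ^ 2).degree := by
        rw [degree_eq_natDegree hPmonic.ne_zero, hPdeg, hdegS2]
      have h2 := degree_sub_lt h1 hPmonic.ne_zero
        (by rw [hPmonic.leadingCoeff, (hSmonic.pow 2).leadingCoeff])
      rw [degree_eq_natDegree hPmonic.ne_zero, hPdeg] at h2
      exact h2
    have hdegsumS : (∑ i, C (c i) * (Sj i) ^ 2).degree < ((2 * (n - 1) : ℕ) : WithBot ℕ) := by
      refine lt_of_le_of_lt (degree_sum_le _ _) ?_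
      refine (Finset.sup_lt_iff (by exact_mod_cast WithBot.bot_lt_coe _)).mpr ?_
      intro i _
      refine lt_of_le_of_lt (degree_mul_le _ _) ?_
      have h2 : ((Sj i) ^ 2).degree = ((2 * (n - 1 - 1) : ℕ) : WithBot ℕ) := by
        rw [degree_eq_natDegree (((hSjmonic i).pow _).ne_zero), natDegree_pow, hSjdeg i]
      calc (C (c i)).degree + ((Sj i) ^ 2).degree
          ≤ 0 + ((2 * (n - 1 - 1) : ℕ) : WithBot ℕ) := add_le_add degree_C_le (le_of_eq h2)
        _ = ((2 * (n - 1 - 1) : ℕ) : WithBot ℕ) := zero_add _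
        _ < ((2 * (n - 1) : ℕ) : WithBot ℕ) := by
            exact_mod_cast (by omega : 2 * (n - 1 - 1) < 2 * (n - 1))
    have hdegH : (P - S ^ 2 - ∑ i, C (c i) * (Sj i) ^ 2).degree
        < (∏ j : Fin (n - 1), (X - C (t j)) ^ 2).degree := by
      rw [← hSsq, hdegS2]
      refine lt_of_le_of_lt (degree_sub_le _ _) ?_
      rw [sup_lt_iff]
      exact ⟨hdegPS, hdegsumS⟩
    have hH0 : P - S ^ 2 - ∑ i, C (c i) * (Sj i) ^ 2 = 0 :=
      eq_zero_of_dvd_of_degree_lt hdvd hdegH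
    linear_combination hH0
  -- Interpolation
  have hinterp : ∀ T : Polynomial ℝ, T.degree < (n : ℕ) →
      T = ∑ k, C (T.eval (x k) / q k) * Qk k := by
    intro T hT
    have hvan : ∀ i, (T - ∑ k, C (T.eval (x k) / q k) * Qk k).eval (x i) = 0 := by
      intro i
      simp only [eval_sub, eval_finset_sum, eval_mul, eval_C]
      rw [Finset.sum_eq_single i]
      · rw [div_mul_cancel₀ _ (hqe i)]; ring
      · intro l _ hli
        rw [hcrossQ l i hli]; ring
      · intro hk; exact absurd (mem_univ i) hk
    have hdeg : (T - ∑ k, C (T.eval (x k) / q k) * Qk k).degree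
        < ((Fintype.card (Fin n) : ℕ) : WithBot ℕ) := by
      rw [Fintype.card_fin]
      refine lt_of_le_of_lt (degree_sub_le _ _) ?_
      rw [sup_lt_iff]
      refine ⟨hT, ?_⟩
      refine lt_of_le_of_lt (degree_sum_le _ _) ?_
      refine (Finset.sup_lt_iff (by exact_mod_cast WithBot.bot_lt_coe _)).mpr ?_
      intro l _
      refine lt_of_le_of_lt (degree_mul_le _ _) ?_
      have h2 : (Qk l).degree = ((n - 1 : ℕ) : WithBot ℕ) := by
        rw [degree_eq_natDegree (hQkmonic l).ne_zero, hQkdeg l]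
      calc (C (T.eval (x l) / q l)).degree + (Qk l).degree
          ≤ 0 + ((n - 1 : ℕ) : WithBot ℕ) := add_le_add degree_C_le (le_of_eq h2)
        _ = ((n - 1 : ℕ) : WithBot ℕ) := zero_add _
        _ < ((n : ℕ) : WithBot ℕ) := by
            exact_mod_cast (by omega : n - 1 < n)
    exact sub_eq_zero.mp (vv_eq_zero_of_roots hx.injective hdeg hvan)
  -- Cauchy-Schwarz inequality per j
  have hCS : ∀ j, 1 ≤ c j * ∑ k, ((Sj j).eval (x k)) ^ 2 / P.eval (x k) := by
    intro j
    have hdegSj : (Sj j).degree < ((n : ℕ) : WithBot ℕ) := by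
      rw [degree_eq_natDegree (hSjmonic j).ne_zero, hSjdeg j]
      exact_mod_cast (by omega : n - 1 - 1 < n)
    have h1 : (Sj j).eval (t j) = ∑ k, ((Sj j).eval (x k) / q k) * (Qk k).eval (t j) := by
      have h0 := congrArg (eval (t j)) (hinterp (Sj j) hdegSj)
      simpa only [eval_finset_sum, eval_mul, eval_C] using h0
    have h2 : ∑ k, b k * ((Qk k).eval (t j)) ^ 2 = P.eval (t j) := by
      have h0 := congrArg (eval (t j)) hI
      simp only [eval_finset_sum, eval_mul, eval_C, eval_pow] at h0
      exact h0.symm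
    have hcs0 : ((Sj j).eval (t j)) ^ 2
        ≤ (∑ k, ((Sj j).eval (x k)) ^ 2 / P.eval (x k)) * P.eval (t j) := by
      have key := Finset.sum_mul_sq_le_sq_mul_sq Finset.univ
        (fun k => (Sj j).eval (x k) / Real.sqrt (P.eval (x k)))
        (fun k => Real.sqrt (P.eval (x k)) * (Qk k).eval (t j) / q k)
      have e1 : ∀ k : Fin n, ((Sj j).eval (x k) / Real.sqrt (P.eval (x k)))
          * (Real.sqrt (P.eval (x k)) * (Qk k).eval (t j) / q k)
          = ((Sj j).eval (x k) / q k) * (Qk k).eval (t j) := by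
        intro k
        have hs : Real.sqrt (P.eval (x k)) ≠ 0 := ne_of_gt (Real.sqrt_pos.mpr (hPpos _))
        have hq0 : q k ≠ 0 := hqne k
        field_simp
      have e2 : ∀ k : Fin n, ((Sj j).eval (x k) / Real.sqrt (P.eval (x k))) ^ 2
          = ((Sj j).eval (x k)) ^ 2 / P.eval (x k) := by
        intro k
        rw [div_pow, Real.sq_sqrt (le_of_lt (hPpos _))]
      have e3 : ∀ k : Fin n, (Real.sqrt (P.eval (x k)) * (Qk k).eval (t j) / q k) ^ 2
          = b k * ((Qk k).eval (t j)) ^ 2 := by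
        intro k
        rw [div_pow, mul_pow, Real.sq_sqrt (le_of_lt (hPpos _)), hbeq k]
        ring
      rw [Finset.sum_congr rfl (fun k _ => e1 k)] at key
      rw [Finset.sum_congr rfl (fun k _ => e2 k)] at key
      rw [Finset.sum_congr rfl (fun k _ => e3 k)] at key
      rw [h2, ← h1] at key
      exact key
    have hp : 0 < P.eval (t j) := hPpos _
    have h3 := mul_le_mul_of_nonneg_left hcs0 (le_of_lt (hcpos j))
    rw [hcdef j] at h3
    have h4 : 1 * P.eval (t j)
        ≤ (c j * ∑ k, ((Sj j).eval (x k)) ^ 2 / P.eval (x k)) * P.eval (t j) := by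
      rw [one_mul]
      calc P.eval (t j)
          ≤ c j * ((∑ k, ((Sj j).eval (x k)) ^ 2 / P.eval (x k)) * P.eval (t j)) := h3
        _ = (c j * ∑ k, ((Sj j).eval (x k)) ^ 2 / P.eval (x k)) * P.eval (t j) := by ring
    exact le_of_mul_le_mul_right h4 hp
  -- Sigma ≤ 1
  have hSigma : ∑ k, (S.eval (x k)) ^ 2 / P.eval (x k) ≤ 1 := by
    have hsum1 : ((n : ℝ) - 1) ≤ ∑ j, c j * ∑ k, ((Sj j).eval (x k)) ^ 2 / P.eval (x k) := by
      have h0 : ∑ j : Fin (n - 1), (1 : ℝ)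
          ≤ ∑ j, c j * ∑ k, ((Sj j).eval (x k)) ^ 2 / P.eval (x k) :=
        Finset.sum_le_sum (fun j _ => hCS j)
      have h1 : ∑ j : Fin (n - 1), (1 : ℝ) = ((n - 1 : ℕ) : ℝ) := by simp
      have h2 : ((n - 1 : ℕ) : ℝ) = (n : ℝ) - 1 := by
        have hn1 : (1 : ℕ) ≤ n := by omega
        push_cast [Nat.cast_sub hn1]
        ring
      rw [h1, h2] at h0
      exact h0
    have hswap : ∑ j, c j * ∑ k, ((Sj j).eval (x k)) ^ 2 / P.eval (x k)
        = ∑ k, (P.eval (x k) - (S.eval (x k)) ^ 2) / P.eval (x k) := by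
      calc ∑ j, c j * ∑ k, ((Sj j).eval (x k)) ^ 2 / P.eval (x k)
          = ∑ j, ∑ k, c j * (((Sj j).eval (x k)) ^ 2 / P.eval (x k)) :=
            Finset.sum_congr rfl (fun j _ => Finset.mul_sum _ _ _)
        _ = ∑ k, ∑ j, c j * (((Sj j).eval (x k)) ^ 2 / P.eval (x k)) := Finset.sum_comm
        _ = ∑ k, (P.eval (x k) - (S.eval (x k)) ^ 2) / P.eval (x k) := by
            refine Finset.sum_congr rfl (fun k _ => ?_)
            have hIIx : P.eval (x k) - (S.eval (x k)) ^ 2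
                = ∑ j, c j * ((Sj j).eval (x k)) ^ 2 := by
              have h0 := congrArg (eval (x k)) hII
              simp only [eval_add, eval_pow, eval_finset_sum, eval_mul, eval_C] at h0
              linarith [h0]
            rw [hIIx, Finset.sum_div]
            exact Finset.sum_congr rfl (fun j _ => (mul_div_assoc _ _ _).symm)
    have hsplit : ∑ k, (P.eval (x k) - (S.eval (x k)) ^ 2) / P.eval (x k)
        = (n : ℝ) - ∑ k, (S.eval (x k)) ^ 2 / P.eval (x k) := by
      calc ∑ k, (P.eval (x k) - (S.eval (x k)) ^ 2) / P.eval (x k)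
          = ∑ k : Fin n, (1 - (S.eval (x k)) ^ 2 / P.eval (x k)) := by
            refine Finset.sum_congr rfl (fun k _ => ?_)
            rw [sub_div, div_self (ne_of_gt (hPpos _))]
        _ = (n : ℝ) - ∑ k, (S.eval (x k)) ^ 2 / P.eval (x k) := by
            rw [Finset.sum_sub_distrib]
            simp
    rw [hswap, hsplit] at hsum1
    linarith
  -- e = b
  obtain ⟨e, heeq⟩ : ∃ e : Fin n → ℝ, ∀ k, e k = S.eval (x k) / q k := ⟨_, fun _ => rfl⟩
  have hSdegree : S.degree < ((n : ℕ) : WithBot ℕ) := by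
    rw [degree_eq_natDegree hSmonic.ne_zero, hSdeg]
    exact_mod_cast (by omega : n - 1 < n)
  have hSinterp : S = ∑ k, C (S.eval (x k) / q k) * Qk k := hinterp S hSdegree
  have hsume : ∑ k, e k = 1 := by
    have h0 := congrArg (fun p : Polynomial ℝ => p.coeff (n - 1)) hSinterp
    simp only [finset_sum_coeff, coeff_C_mul] at h0
    have h1 : S.coeff (n - 1) = 1 := by
      have h := hSmonic.coeff_natDegree
      rwa [hSdeg] at h
    have h2 : ∀ k : Fin n, (Qk k).coeff (n - 1) = 1 := by
      intro k
      have h := (hQkmonic k).coeff_natDegree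
      rwa [hQkdeg k] at h
    rw [h1] at h0
    rw [Finset.sum_congr rfl (fun k _ => by rw [h2 k, mul_one])] at h0
    rw [Finset.sum_congr rfl (fun k _ => heeq k)]
    exact h0.symm
  have hsumb : ∑ k, b k = 1 := by
    have h0 := congrArg (fun p : Polynomial ℝ => p.coeff (2 * (n - 1))) hI
    simp only [finset_sum_coeff, coeff_C_mul] at h0
    have h1 : P.coeff (2 * (n - 1)) = 1 := by
      have h := hPmonic.coeff_natDegree
      rwa [hPdeg] at h
    have h2 : ∀ k : Fin n, ((Qk k) ^ 2).coeff (2 * (n - 1)) = 1 := by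
      intro k
      have h := ((hQkmonic k).pow 2).coeff_natDegree
      rwa [natDegree_pow, hQkdeg k] at h
    rw [h1] at h0
    rw [Finset.sum_congr rfl (fun k _ => by rw [h2 k, mul_one])] at h0
    exact h0.symm
  have hebsum : ∑ k, (e k - b k) ^ 2 / b k ≤ 0 := by
    have hterm : ∀ k : Fin n, (e k - b k) ^ 2 / b k
        = (S.eval (x k)) ^ 2 / P.eval (x k) - 2 * e k + b k := by
      intro k
      have hq0 : q k ≠ 0 := hqne k
      have hp0 : P.eval (x k) ≠ 0 := ne_of_gt (hPpos _)
      rw [heeq k, hbeq k]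
      field_simp
      ring
    rw [Finset.sum_congr rfl (fun k _ => hterm k), Finset.sum_add_distrib,
      Finset.sum_sub_distrib, ← Finset.mul_sum, hsume, hsumb]
    linarith [hSigma]
  have heb : ∀ k, e k = b k := by
    have hnn : ∀ k ∈ (univ : Finset (Fin n)), 0 ≤ (e k - b k) ^ 2 / b k :=
      fun k _ => div_nonneg (sq_nonneg _) (le_of_lt (hbpos k))
    have hz : ∑ k, (e k - b k) ^ 2 / b k = 0 := le_antisymm hebsum (Finset.sum_nonneg hnn)
    intro k
    have h0 := (Finset.sum_eq_zero_iff_of_nonneg hnn).mp hz k (mem_univ k)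
    have h2 : (e k - b k) ^ 2 = 0 := by
      rcases div_eq_zero_iff.mp h0 with h | h
      · exact h
      · exact absurd h (ne_of_gt (hbpos k))
    have h3 : e k - b k = 0 := by
      have := sq_eq_zero_iff.mp h2
      exact this
    linarith
  -- S in the Q-frame
  have hSA : S = ∑ k, C (b k) * Qk k := by
    rw [hSinterp]
    refine Finset.sum_congr rfl (fun k _ => ?_)
    rw [← heeq k, heb k]
  -- Wronskian equals P
  have hW : derivative Q * S - Q * derivative S = P := by
    have hdS : derivative S = ∑ k, C (b k) * derivative (Qk k) := by
      rw [hSA, derivative_sum]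
      refine Finset.sum_congr rfl (fun k _ => ?_)
      rw [derivative_mul, derivative_C, zero_mul, zero_add]
    have hper : ∀ k, derivative Q * Qk k - Q * derivative (Qk k) = (Qk k) ^ 2 := by
      intro k
      rw [hQdsplit k]
      conv_lhs => rw [hQsplit k]
      ring
    calc derivative Q * S - Q * derivative S
        = ∑ k, C (b k) * (derivative Q * Qk k - Q * derivative (Qk k)) := by
          rw [hdS, hSA, Finset.mul_sum, Finset.mul_sum, ← Finset.sum_sub_distrib]
          exact Finset.sum_congr rfl (fun k _ => by ring)
      _ = ∑ k, C (b k) * (Qk k) ^ 2 := Finset.sum_congr rfl (fun k _ => by rw [hper k])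
      _ = P := hI.symm
  -- final computation
  have hkey : Q * S * (R' - R) = 0 := by
    have hW' : derivative (derivative Q) * S - Q * derivative (derivative S) = derivative P := by
      have h0 := congrArg derivative hW
      rw [derivative_sub, derivative_mul, derivative_mul] at h0
      linear_combination h0
    have h1 : P * derivative (derivative Q) - derivative P * derivative Q = -(R * Q) := by
      linear_combination hR
    have h2 : P * derivative (derivative S) - derivative P * derivative S = -(R' * S) := by
      linear_combination hR'
    calc Q * S * (R' - R)
        = (P * derivative (derivative Q) - derivative P * derivative Q) * S
          - Q * (P * derivative (derivative S) - derivative P * derivative S) := by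
          rw [h1, h2]; ring
      _ = P * (derivative (derivative Q) * S - Q * derivative (derivative S))
          - derivative P * (derivative Q * S - Q * derivative S) := by ring
      _ = P * derivative P - derivative P * P := by rw [hW', hW]
      _ = 0 := by ring
  have hQne : Q ≠ 0 := by
    rw [hQ]; exact (monic_prod_of_monic _ _ (fun i _ => monic_X_sub_C _)).ne_zero
  have hSne : S ≠ 0 := by
    rw [hS]; exact (monic_prod_of_monic _ _ (fun i _ => monic_X_sub_C _)).ne_zero
  have : R' - R = 0 := by
    rcases mul_eq_zero.mp hkey with h | h
    · rcases mul_eq_zero.mp h with h' | h'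
      · exact absurd h' hQne
      · exact absurd h' hSne
    · exact h
  have h2 := sub_eq_zero.mp this
  exact h2.symm
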